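/- Hölder-type average-trajectory bound: let T ≥ 1, a ≥ 1, and let d_0, …, d_T ≥ 0 and w_0, …, w_{T−1} ≥ 0 be real numbers with ∑_{t=0}^T d_t^a ≤ γ ∑_{t=0}^{T−1} w_t^b for some γ > 0 and 1 ≤ b ≤ a. If additionally ∑_{t=0}^{T−1} w_t ≤ ε, then (1/T) ∑_{t=0}^T d_t ≤ (γ/T)^{1/a} · ((T+1)/T)^{1−1/a} · ε^{b/a}. -/

import Mathlib

open scoped BigOperators

lemma aux_add_rpow (x y p : ℝ) (hx : 0 ≤ x) (hy : 0 ≤ y) (hp : 1 ≤ p) :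
    x ^ p + y ^ p ≤ (x + y) ^ p := by
  lift x to NNReal using hx
  lift y to NNReal using hy
  exact_mod_cast NNReal.add_rpow_le_rpow_add x y hp

lemma aux_sum_rpow (s : Finset ℕ) (f : ℕ → ℝ) (hf : ∀ i, 0 ≤ f i) (p : ℝ) (hp : 1 ≤ p) :
    ∑ i ∈ s, f i ^ p ≤ (∑ i ∈ s, f i) ^ p := by
  induction s using Finset.cons_induction with
  | empty => simp [Real.zero_rpow (by linarith : p ≠ 0)]
  | cons a s has ih =>
    rw [Finset.sum_cons, Finset.sum_cons]
    calc f a ^ p + ∑ i ∈ s, f i ^ p ≤ f a ^ p + (∑ i ∈ s, f i) ^ p :=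
          add_le_add_right ih _
      _ ≤ (f a + ∑ i ∈ s, f i) ^ p :=
          aux_add_rpow _ _ p (hf a) (Finset.sum_nonneg fun i _ => hf i) hp

/-- Hölder-type average-trajectory bound. -/
theorem stmt17 (T : ℕ) (hT : 1 ≤ T) (a b γ ε : ℝ)
    (ha : 1 ≤ a) (hb : 1 ≤ b) (hba : b ≤ a) (hγ : 0 < γ) (hε : 0 ≤ ε)
    (d w : ℕ → ℝ)
    (hd : ∀ t, 0 ≤ d t) (hw : ∀ t, 0 ≤ w t)
    (hsum : ∑ t ∈ Finset.range (T + 1), d t ^ a ≤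
      γ * ∑ t ∈ Finset.range T, w t ^ b)
    (hwsum : ∑ t ∈ Finset.range T, w t ≤ ε) :
    (1 / (T : ℝ)) * ∑ t ∈ Finset.range (T + 1), d t ≤
      (γ / (T : ℝ)) ^ (1 / a) * (((T : ℝ) + 1) / (T : ℝ)) ^ (1 - 1 / a) *
        ε ^ (b / a) := by
  have hTpos : (0 : ℝ) < T := by exact_mod_cast hT
  set N : ℝ := (T : ℝ) + 1 with hNdef
  have hN : (0 : ℝ) < N := by positivity
  have hapos : (0 : ℝ) < a := by linarith
  set D : ℝ := ∑ t ∈ Finset.range (T + 1), d t with hD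
  set Q : ℝ := ∑ t ∈ Finset.range (T + 1), d t ^ a with hQ
  have hQ0 : 0 ≤ Q := Finset.sum_nonneg fun i _ => Real.rpow_nonneg (hd i) a
  -- Step 1: Q ≤ γ * ε ^ b
  have hw0 : 0 ≤ ∑ t ∈ Finset.range T, w t := Finset.sum_nonneg fun i _ => hw i
  have step1 : Q ≤ γ * ε ^ b := by
    calc Q ≤ γ * ∑ t ∈ Finset.range T, w t ^ b := hsum
      _ ≤ γ * (∑ t ∈ Finset.range T, w t) ^ b := by
          exact mul_le_mul_of_nonneg_left
            (aux_sum_rpow _ _ hw b hb) hγ.le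
      _ ≤ γ * ε ^ b := by
          exact mul_le_mul_of_nonneg_left
            (Real.rpow_le_rpow hw0 hwsum (by linarith)) hγ.le
  -- Step 2: power-mean inequality (Hölder with uniform weights)
  have hsumw : ∑ _t ∈ Finset.range (T + 1), (1 / N) = 1 := by
    rw [Finset.sum_const, Finset.card_range, nsmul_eq_mul]
    push_cast [hNdef]
    field_simp
  have step2 : (1 / N) * D ≤ ((1 / N) * Q) ^ (1 / a) := by
    have := Real.arith_mean_le_rpow_mean (Finset.range (T + 1)) (fun _ => 1 / N) d
      (fun i _ => by positivity) hsumw (fun i _ => hd i) ha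
    simpa [← Finset.mul_sum, hD, hQ] using this
  -- combine
  have step3 : (1 / N) * D ≤ ((1 / N) * (γ * ε ^ b)) ^ (1 / a) := by
    refine step2.trans (Real.rpow_le_rpow (by positivity) ?_ (by positivity))
    exact mul_le_mul_of_nonneg_left step1 (by positivity)
  have hDle : D ≤ N * ((1 / N) * (γ * ε ^ b)) ^ (1 / a) := by
    have := mul_le_mul_of_nonneg_left step3 hN.le
    calc D = N * ((1 / N) * D) := by field_simp
      _ ≤ N * ((1 / N) * (γ * ε ^ b)) ^ (1 / a) := this
  -- final algebraic identity
  have key : (γ / (T : ℝ)) ^ (1 / a) * (N / (T : ℝ)) ^ (1 - 1 / a) * ε ^ (b / a)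
      = (1 / (T : ℝ)) * (N * ((1 / N) * (γ * ε ^ b)) ^ (1 / a)) := by
    have h1 : ((1 / N) * (γ * ε ^ b)) ^ (1 / a)
        = (1 / N) ^ (1 / a) * (γ ^ (1 / a) * ε ^ (b / a)) := by
      rw [Real.mul_rpow (by positivity) (by positivity),
        Real.mul_rpow hγ.le (by positivity), ← Real.rpow_mul hε, mul_one_div]
    rw [h1, Real.div_rpow hγ.le hTpos.le, Real.div_rpow hN.le hTpos.le,
      Real.rpow_sub hN, Real.rpow_sub hTpos, Real.rpow_one, Real.rpow_one,
      Real.div_rpow (by norm_num) hN.le, Real.one_rpow]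
    have hTa : ((T : ℝ)) ^ (1 / a) ≠ 0 := by positivity
    have hNa : N ^ (1 / a) ≠ 0 := by positivity
    field_simp
  rw [key]
  exact mul_le_mul_of_nonneg_left hDle (by positivity)
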